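/- Let N ≥ 2 and K ≥ 1, and let (w, P) be a configuration with confidence e. Then the Gini index impurity satisfies ∑_{k ∈ Fin K} w k · ∑_{i ∈ Fin N} P k i · (1 − P k i) ≥ 1 − e. (Specialization of the paper's Theorem 4 to the Gini impurity f(x) = x(1−x), l(x) = 1−x.) -/
import Mathlib


open Finset

/-- The maximum of a real-valued vector over the finite index set `Fin N` (`N > 0`). -/
noncomputable def colMax {N : ℕ} (hN : 0 < N) (v : Fin N → ℝ) : ℝ :=
  Finset.univ.sup' (Finset.univ_nonempty_iff.mpr ⟨⟨0, hN⟩⟩) v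

/-- Specialization of the paper's Theorem 4 to the Gini impurity: the Gini index
impurity of a configuration is at least `1 - e`, where `e` is its confidence. -/
theorem gini_impurity_lower_bound (N K : ℕ) (hN : 2 ≤ N) (hK : 1 ≤ K)
    (w : Fin K → ℝ) (hw : ∀ k, 0 ≤ w k) (hws : ∑ k, w k = 1)
    (P : Fin K → Fin N → ℝ) (hP : ∀ k i, 0 ≤ P k i) (hPs : ∀ k, ∑ i, P k i = 1)
    (e : ℝ) (he : e = ∑ k, w k * colMax (by omega) (P k)) :
    1 - e ≤ ∑ k, w k * ∑ i, P k i * (1 - P k i) := by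
  have hN0 : 0 < N := by omega
  have key : ∀ k, 1 - colMax hN0 (P k) ≤ ∑ i, P k i * (1 - P k i) := by
    intro k
    have hsq : ∑ i, P k i * P k i ≤ colMax hN0 (P k) := by
      calc ∑ i, P k i * P k i ≤ ∑ i, colMax hN0 (P k) * P k i := by
            apply Finset.sum_le_sum
            intro i _
            exact mul_le_mul_of_nonneg_right
              (Finset.le_sup' (P k) (Finset.mem_univ i)) (hP k i)
        _ = colMax hN0 (P k) := by rw [← Finset.mul_sum, hPs k, mul_one]
    have : ∑ i, P k i * (1 - P k i) = 1 - ∑ i, P k i * P k i := by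
      simp only [mul_sub, mul_one, Finset.sum_sub_distrib, hPs k]
    linarith
  subst he
  rw [show (1:ℝ) - ∑ k, w k * colMax hN0 (P k)
      = ∑ k, w k * (1 - colMax hN0 (P k)) by
    simp only [mul_sub, mul_one, Finset.sum_sub_distrib, hws]]
  exact Finset.sum_le_sum fun k _ => mul_le_mul_of_nonneg_left (key k) (hw k)
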